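/- arXiv:1912.11190 — 3 statements merged into one kernel-verified Lean document; each statement's English description precedes it below -/
import Mathlib

section
/- For all real numbers a, b ≥ 0 and every real p ≥ 1, one has (a - b)(a^(2p-1) - b^(2p-1)) ≥ ((2p-1)/p²)·(a^p - b^p)². -/
open MeasureTheory

lemma ioc_integral_rpow {b a r : ℝ} (hb : 0 ≤ b) (hab : b ≤ a) (hr : 0 ≤ r) :
    ∫ x in Set.Ioc b a, x ^ r = (a ^ (r + 1) - b ^ (r + 1)) / (r + 1) := by
  rw [← intervalIntegral.integral_of_le hab]
  exact integral_rpow (Or.inl (by linarith))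

/-- For `a, b ≥ 0` and real `p ≥ 1`:
`(a-b)(a^(2p-1) - b^(2p-1)) ≥ ((2p-1)/p²)(a^p - b^p)²`. -/
theorem stmt_4 (a b p : ℝ) (ha : 0 ≤ a) (hb : 0 ≤ b) (hp : 1 ≤ p) :
    ((2 * p - 1) / p ^ 2) * (a ^ p - b ^ p) ^ 2 ≤
      (a - b) * (a ^ (2 * p - 1) - b ^ (2 * p - 1)) := by
  wlog hab : b ≤ a with H
  · have h := H b a p hb ha hp (le_of_lt (not_le.1 hab))
    have e1 : (b ^ p - a ^ p) ^ 2 = (a ^ p - b ^ p) ^ 2 := by ring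
    have e2 : (b - a) * (b ^ (2 * p - 1) - a ^ (2 * p - 1))
        = (a - b) * (a ^ (2 * p - 1) - b ^ (2 * p - 1)) := by ring
    rw [e1, e2] at h
    exact h
  have hp0 : (0 : ℝ) < p := by linarith
  have h2p : (0 : ℝ) < 2 * p - 1 := by linarith
  set μ := volume.restrict (Set.Ioc b a) with hμ
  have hconj : Real.HolderConjugate 2 2 := ⟨by norm_num, by norm_num, by norm_num⟩
  -- membership in L²
  have hmeas : Measurable fun x : ℝ => x ^ (p - 1) := by fun_prop
  have hfin : IsFiniteMeasure μ := by
    constructor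
    rw [hμ, Measure.restrict_apply_univ, Real.volume_Ioc]
    exact ENNReal.ofReal_lt_top
  have hbound : ∀ᵐ x ∂μ, ‖x ^ (p - 1)‖ ≤ a ^ (p - 1) := by
    filter_upwards [ae_restrict_mem measurableSet_Ioc] with x hx
    have hx0 : 0 ≤ x := le_trans hb (le_of_lt hx.1)
    rw [Real.norm_of_nonneg (Real.rpow_nonneg hx0 _)]
    exact Real.rpow_le_rpow hx0 hx.2 (by linarith)
  have hf : MemLp (fun x : ℝ => x ^ (p - 1)) (ENNReal.ofReal 2) μ :=
    MemLp.of_bound hmeas.aestronglyMeasurable _ hbound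
  have hg : MemLp (fun _ : ℝ => (1 : ℝ)) (ENNReal.ofReal 2) μ := memLp_const 1
  have hcs := integral_mul_le_Lp_mul_Lq_of_nonneg hconj
    (by
      filter_upwards [ae_restrict_mem measurableSet_Ioc] with x hx
      exact Real.rpow_nonneg (le_trans hb hx.1.le) _)
    (Filter.Eventually.of_forall fun _ => zero_le_one) hf hg
  -- compute the three integrals
  have hI1 : ∫ x, x ^ (p - 1) * 1 ∂μ = (a ^ p - b ^ p) / p := by
    simp only [mul_one, hμ]
    rw [ioc_integral_rpow hb hab (by linarith)]
    norm_num
  have hI2 : ∫ x, (x ^ (p - 1)) ^ (2 : ℝ) ∂μ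
      = (a ^ (2 * p - 1) - b ^ (2 * p - 1)) / (2 * p - 1) := by
    rw [hμ]
    rw [setIntegral_congr_fun measurableSet_Ioc (g := fun x => x ^ ((p - 1) * 2))
      (fun x hx => (Real.rpow_mul (le_trans hb (le_of_lt hx.1)) _ _).symm)]
    rw [ioc_integral_rpow hb hab (by nlinarith)]
    ring_nf
  have hI3 : ∫ _x, (1 : ℝ) ^ (2 : ℝ) ∂μ = a - b := by
    simp only [Real.one_rpow, hμ, integral_const, Measure.restrict_apply_univ,
      Real.volume_Ioc, smul_eq_mul, mul_one]
    simp only [Measure.real, Measure.restrict_apply_univ, Real.volume_Ioc]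
    exact ENNReal.toReal_ofReal (by linarith)
  rw [hI1, hI2, hI3] at hcs
  set I : ℝ := (a ^ (2 * p - 1) - b ^ (2 * p - 1)) / (2 * p - 1) with hIdef
  have hIpos : 0 ≤ I := by
    have : b ^ (2 * p - 1) ≤ a ^ (2 * p - 1) :=
      Real.rpow_le_rpow hb hab (by linarith)
    apply div_nonneg (by linarith) (by linarith)
  have hD : 0 ≤ a - b := by linarith
  have hL : 0 ≤ (a ^ p - b ^ p) / p := by
    have : b ^ p ≤ a ^ p := Real.rpow_le_rpow hb hab (by linarith)
    apply div_nonneg (by linarith) (by linarith)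
  have hsq : ((a ^ p - b ^ p) / p) ^ 2 ≤ I * (a - b) := by
    calc ((a ^ p - b ^ p) / p) ^ 2
        ≤ (I ^ ((1:ℝ)/2) * (a - b) ^ ((1:ℝ)/2)) ^ 2 := by
          apply pow_le_pow_left₀ hL hcs
      _ = I * (a - b) := by
          rw [mul_pow, ← Real.rpow_natCast (I ^ ((1:ℝ)/2)) 2,
            ← Real.rpow_natCast ((a - b) ^ ((1:ℝ)/2)) 2,
            ← Real.rpow_mul hIpos, ← Real.rpow_mul hD]
          norm_num
  rw [div_pow] at hsq
  have h3 := mul_le_mul_of_nonneg_left hsq h2p.le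
  calc ((2 * p - 1) / p ^ 2) * (a ^ p - b ^ p) ^ 2
      = (2 * p - 1) * ((a ^ p - b ^ p) ^ 2 / p ^ 2) := by ring
    _ ≤ (2 * p - 1) * (I * (a - b)) := h3
    _ = (a - b) * (a ^ (2 * p - 1) - b ^ (2 * p - 1)) := by
        rw [hIdef]; field_simp
end

section
/- For all real numbers a, b ≥ 0 and every real p ≥ 1, one has (a - b)(a^(2p-1) - b^(2p-1)) ≥ (1/p)·(a^p - b^p)². -/
/-- Key: for `0 ≤ b ≤ a` and `1 ≤ p`, `a^p - b^p ≤ p * a^(p-1) * (a-b)`. -/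
lemma key_rpow_sub_le (a b p : ℝ) (hb : 0 ≤ b) (hba : b ≤ a) (hp : 1 ≤ p) :
    a ^ p - b ^ p ≤ p * a ^ (p - 1) * (a - b) := by
  have ha : 0 ≤ a := hb.trans hba
  rcases ha.eq_or_lt with h0 | hapos
  · have hb0 : b = 0 := le_antisymm (h0 ▸ hba) hb
    subst hb0
    rw [← h0]
    rw [Real.zero_rpow (by linarith : p ≠ 0)]
    simp
  · have hber := one_add_mul_self_le_rpow_one_add
      (s := b / a - 1) (by have := div_nonneg hb ha; linarith) hp
    have heq : (1 : ℝ) + (b / a - 1) = b / a := by ring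
    rw [heq, Real.div_rpow hb ha] at hber
    have hap : (0 : ℝ) < a ^ p := Real.rpow_pos_of_pos hapos p
    have hsplit : a ^ (p - 1) * a = a ^ p := by
      rw [← Real.rpow_add_one (ne_of_gt hapos) (p - 1)]
      norm_num
    have h2 := mul_le_mul_of_nonneg_left hber hap.le
    rw [mul_div_cancel₀ _ (ne_of_gt hap)] at h2
    have hane : a ≠ 0 := ne_of_gt hapos
    have hba' : a ^ p * (b / a) = b * a ^ (p - 1) := by
      field_simp
      nlinarith [hsplit]
    nlinarith [h2, hba']

/-- For `a, b ≥ 0` and real `p ≥ 1`: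
`(a-b)(a^(2p-1) - b^(2p-1)) ≥ (1/p)(a^p - b^p)²`. -/
theorem stmt_5 (a b p : ℝ) (ha : 0 ≤ a) (hb : 0 ≤ b) (hp : 1 ≤ p) :
    (1 / p) * (a ^ p - b ^ p) ^ 2 ≤
      (a - b) * (a ^ (2 * p - 1) - b ^ (2 * p - 1)) := by
  have hp0 : (0 : ℝ) < p := by linarith
  -- WLOG b ≤ a
  wlog hba : b ≤ a with H
  · have := H b a p hb ha hp hp0 (le_of_not_ge hba)
    calc (1 / p) * (a ^ p - b ^ p) ^ 2 = (1 / p) * (b ^ p - a ^ p) ^ 2 := by ring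
      _ ≤ (b - a) * (b ^ (2 * p - 1) - a ^ (2 * p - 1)) := this
      _ = (a - b) * (a ^ (2 * p - 1) - b ^ (2 * p - 1)) := by ring
  have h1 := key_rpow_sub_le a b p hb hba hp
  have h2 : 0 ≤ a ^ p - b ^ p := by
    have := Real.rpow_le_rpow hb hba hp0.le
    linarith
  have hab : 0 ≤ a - b := by linarith
  have hp1 : 0 ≤ p - 1 := by linarith
  have h3 : b ^ (p - 1) ≤ a ^ (p - 1) := Real.rpow_le_rpow hb hba hp1
  have e1 : a ^ (p - 1) * a ^ p = a ^ (2 * p - 1) := by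
    rw [← Real.rpow_add' ha (by linarith : p - 1 + p ≠ 0)]
    ring_nf
  have e2 : b ^ (p - 1) * b ^ p = b ^ (2 * p - 1) := by
    rw [← Real.rpow_add' hb (by linarith : p - 1 + p ≠ 0)]
    ring_nf
  have hbp : (0 : ℝ) ≤ b ^ p := Real.rpow_nonneg hb p
  have hap1 : (0 : ℝ) ≤ a ^ (p - 1) := Real.rpow_nonneg ha _
  -- step A : (a^p-b^p)^2 ≤ (p * a^(p-1) * (a-b)) * (a^p - b^p)
  have stepA : (a ^ p - b ^ p) ^ 2 ≤ (p * a ^ (p - 1) * (a - b)) * (a ^ p - b ^ p) := by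
    nlinarith [mul_le_mul_of_nonneg_right h1 h2]
  -- step B : a^(p-1) * (a^p - b^p) ≤ a^(2p-1) - b^(2p-1)
  have stepB : a ^ (p - 1) * (a ^ p - b ^ p) ≤ a ^ (2 * p - 1) - b ^ (2 * p - 1) := by
    have hB : b ^ (2 * p - 1) ≤ a ^ (p - 1) * b ^ p := by
      rw [← e2]; exact mul_le_mul_of_nonneg_right h3 hbp
    nlinarith [e1]
  rw [one_div, inv_mul_le_iff₀ hp0]
  have hstep : p * (a - b) * (a ^ (p - 1) * (a ^ p - b ^ p)) ≤
      p * (a - b) * (a ^ (2 * p - 1) - b ^ (2 * p - 1)) :=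
    mul_le_mul_of_nonneg_left stepB (by positivity)
  nlinarith [stepA, hstep]
end

section
/- Let w : (0,∞) → (0,∞) be non-decreasing and let u : [0,∞) → (0,∞) be continuously differentiable, satisfying u'(t) ≤ -b·t^(p-2)·u(t)^(1+θ)/w(t)^θ + K·u(t) for all t ≥ 0, where b > 0, p > 1, θ > 0, K > 0. Then for every a ≥ 1 and every t > 0, u(t) ≤ (2p^a/(θb))^(1/θ) · t^(-(p-1)/θ) · e^(K·p^(-a)·t) · w(t). -/
set_option maxHeartbeats 1000000


/-- Davies iteration lemma: if `w` is positive non-decreasing on `(0,∞)`, `u` is a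
positive `C¹` function on `[0,∞)` satisfying
`u'(t) ≤ -b t^(p-2) u(t)^(1+θ)/w(t)^θ + K u(t)` for all `t ≥ 0`, then for every
`a ≥ 1` and `t > 0`,
`u(t) ≤ (2 p^a/(θ b))^(1/θ) t^(-(p-1)/θ) e^(K p^(-a) t) w(t)`. -/
theorem stmt_7 (w u : ℝ → ℝ) (b p θ K : ℝ)
    (hb : 0 < b) (hp : 1 < p) (hθ : 0 < θ) (hK : 0 < K)
    (hw_pos : ∀ t, 0 < t → 0 < w t)
    (hw_mono : ∀ s t, 0 < s → s ≤ t → w s ≤ w t)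
    (hu_pos : ∀ t, 0 ≤ t → 0 < u t)
    (hu_diff : ContDiffOn ℝ 1 u (Set.Ici (0 : ℝ)))
    (hode : ∀ t, 0 ≤ t →
      derivWithin u (Set.Ici (0 : ℝ)) t ≤
        -b * t ^ (p - 2) * u t ^ (1 + θ) / w t ^ θ + K * u t) :
    ∀ a : ℝ, 1 ≤ a → ∀ t, 0 < t →
      u t ≤ (2 * p ^ a / (θ * b)) ^ (1 / θ) * t ^ (-(p - 1) / θ) *
        Real.exp (K * p ^ (-a) * t) * w t := by
  intro a ha t ht
  have hp0 : (0:ℝ) < p := by linarith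
  set x := p ^ (-a) with hxdef
  have hx0 : 0 < x := Real.rpow_pos_of_pos hp0 _
  have hxp : x ≤ p⁻¹ := by
    rw [hxdef]
    calc p ^ (-a) ≤ p ^ (-1:ℝ) := Real.rpow_le_rpow_of_exponent_le hp.le (by linarith)
    _ = p⁻¹ := Real.rpow_neg_one p
  have hx1 : x < 1 := lt_of_le_of_lt hxp (by rw [inv_lt_one_iff₀]; right; exact hp)
  have hxinv : x⁻¹ = p ^ a := by rw [hxdef, Real.rpow_neg hp0.le, inv_inv]
  -- elementary inequality : (p-1)*x/2 ≤ 1 - (1-x)^(p-1)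
  have helem : (p-1)*x/2 ≤ 1 - (1-x)^(p-1) := by
    have hq0 : 0 < p - 1 := by linarith
    have hy0 : 0 < (p-1) * x := mul_pos hq0 hx0
    have hy1 : (p-1) * x ≤ 1 := by
      have h1 : (p-1) * x ≤ (p-1) * p⁻¹ := by nlinarith
      have h2 : (p-1) * p⁻¹ < 1 := by
        rw [mul_inv_lt_iff₀ hp0]; linarith
      linarith
    have key : (1-x)^(p-1) ≤ 1 - (p-1)*x/2 := by
      have h1 : (1-x)^(p-1) = Real.exp (Real.log (1-x) * (p-1)) :=
        Real.rpow_def_of_pos (by linarith) _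
      have h2 : Real.log (1-x) ≤ -x := by
        have := Real.log_le_sub_one_of_pos (x := 1-x) (by linarith)
        linarith
      have h3 : Real.log (1-x) * (p-1) ≤ -((p-1)*x) := by nlinarith
      have h4 : Real.exp (Real.log (1-x) * (p-1)) ≤ Real.exp (-((p-1)*x)) :=
        Real.exp_le_exp.2 h3
      have h5 : Real.exp (-((p-1)*x)) ≤ (1+(p-1)*x)⁻¹ := by
        rw [Real.exp_neg]
        have h := Real.add_one_le_exp ((p-1)*x)
        exact inv_anti₀ (by linarith) (by linarith)
      have h6 : (1+(p-1)*x)⁻¹ ≤ 1 - (p-1)*x/2 := by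
        rw [inv_le_iff_one_le_mul₀ (by linarith)]
        nlinarith
      rw [h1]; linarith
    linarith
  -- setup
  set s0 := t * (1 - x) with hs0def
  have hs00 : 0 < s0 := mul_pos ht (by linarith)
  have hs0t : s0 < t := by nlinarith
  have hW : 0 < w t := hw_pos t ht
  have hWθ : 0 < w t ^ θ := Real.rpow_pos_of_pos hW θ
  have hq0 : 0 < p - 1 := by linarith
  have htp : 0 < t ^ (p-1) := Real.rpow_pos_of_pos ht _
  set C := θ * b * Real.exp (θ*K*s0) / ((p-1) * w t ^ θ) with hCdef
  have hC0 : 0 < C := div_pos (by positivity) (by positivity)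
  -- differentiability facts
  have hu_don : DifferentiableOn ℝ u (Set.Ici (0:ℝ)) := hu_diff.differentiableOn one_ne_zero
  have hu_at : ∀ s : ℝ, 0 < s → HasDerivAt u (deriv u s) s := fun s hs =>
    ((hu_don s (le_of_lt hs)).differentiableAt (Ici_mem_nhds hs)).hasDerivAt
  have hode' : ∀ s : ℝ, 0 < s →
      deriv u s ≤ -b * s^(p-2) * u s^(1+θ) / w s^θ + K * u s := by
    intro s hs
    have h := hode s hs.le
    rwa [derivWithin_of_mem_nhds (Ici_mem_nhds hs)] at h
  set H : ℝ → ℝ := fun s => Real.exp (θ*K*s) * u s ^ (-θ) - C * s ^ (p-1) with hHdef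
  have hHd : ∀ s ∈ Set.Icc s0 t, HasDerivAt H
      (Real.exp (θ*K*s) * (θ*K*1) * u s ^ (-θ)
        + Real.exp (θ*K*s) * (deriv u s * (-θ) * u s ^ (-θ-1))
        - C * ((p-1) * s ^ (p-1-1))) s := by
    intro s hs
    have hsp : 0 < s := lt_of_lt_of_le hs00 hs.1
    have hus : 0 < u s := hu_pos s hsp.le
    have h1 : HasDerivAt (fun y : ℝ => Real.exp (θ*K*y)) (Real.exp (θ*K*s) * (θ*K*1)) s :=
      ((hasDerivAt_id' (x := s)).const_mul (θ*K)).exp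
    have h2 : HasDerivAt (fun y => u y ^ (-θ)) (deriv u s * (-θ) * u s ^ (-θ - 1)) s :=
      (hu_at s hsp).rpow_const (Or.inl hus.ne')
    have h3 : HasDerivAt (fun y : ℝ => y ^ (p-1)) ((p-1) * s ^ (p-1-1)) s :=
      Real.hasDerivAt_rpow_const (Or.inl hsp.ne')
    exact (h1.mul h2).sub (h3.const_mul C)
  -- monotonicity of H on [s0, t]
  have hmono : MonotoneOn H (Set.Icc s0 t) := by
    apply monotoneOn_of_deriv_nonneg (convex_Icc s0 t)
    · exact fun s hs => ((hHd s hs).continuousAt).continuousWithinAt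
    · intro s hs
      rw [interior_Icc] at hs
      exact ((hHd s (Set.Ioo_subset_Icc_self hs)).differentiableAt).differentiableWithinAt
    · intro s hs
      rw [interior_Icc] at hs
      rw [(hHd s (Set.Ioo_subset_Icc_self hs)).deriv]
      have hsp : 0 < s := lt_of_lt_of_le hs00 hs.1.le
      have hus : 0 < u s := hu_pos s hsp.le
      have hws : 0 < w s := hw_pos s hsp
      have hwsθ : 0 < w s ^ θ := Real.rpow_pos_of_pos hws θ
      have hs2 : 0 < s ^ (p-2) := Real.rpow_pos_of_pos hsp _
      have hu1 : 0 < u s ^ (1+θ) := Real.rpow_pos_of_pos hus _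
      have hum : 0 < u s ^ (-θ-1) := Real.rpow_pos_of_pos hus _
      have he : 0 < Real.exp (θ*K*s) := Real.exp_pos _
      have hexp12 : s ^ (p-1-1) = s ^ (p-2) := by rw [show p-1-1 = p-2 by ring]
      rw [hexp12]
      have hes0 : Real.exp (θ*K*s0) ≤ Real.exp (θ*K*s) := by
        apply Real.exp_le_exp.2
        have : s0 ≤ s := hs.1.le
        nlinarith [mul_pos hθ hK]
      have hstep1 : b*s^(p-2)*u s^(1+θ)/w t^θ ≤ K * u s - deriv u s := by
        have h1 := hode' s hsp
        rw [show -b * s ^ (p-2) * u s ^ (1+θ) / w s ^ θ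
            = -(b * s^(p-2) * u s^(1+θ) / w s ^ θ) by ring] at h1
        have h2 : b*s^(p-2)*u s^(1+θ)/w t^θ ≤ b*s^(p-2)*u s^(1+θ)/w s^θ := by
          rw [div_le_div_iff_of_pos_left (mul_pos (mul_pos hb hs2) hu1) hWθ hwsθ]
          exact Real.rpow_le_rpow hws.le (hw_mono s t hsp hs.2.le) hθ.le
        linarith
      have hmul := mul_le_mul_of_nonneg_left hstep1
        (le_of_lt (mul_pos (mul_pos hθ he) hum))
      have hB : u s ^ (-θ-1) * u s ^ (1+θ) = 1 := by
        rw [← Real.rpow_add hus, show -θ-1+(1+θ) = 0 by ring, Real.rpow_zero]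
      have hident : θ*Real.exp (θ*K*s)*u s^(-θ-1) * (b*s^(p-2)*u s^(1+θ)/w t^θ)
          = θ*Real.exp (θ*K*s)*b*s^(p-2)/w t^θ := by
        calc θ*Real.exp (θ*K*s)*u s^(-θ-1) * (b*s^(p-2)*u s^(1+θ)/w t^θ)
            = (u s^(-θ-1) * u s^(1+θ)) * (θ*Real.exp (θ*K*s)*b*s^(p-2)/w t^θ) := by ring
        _ = θ*Real.exp (θ*K*s)*b*s^(p-2)/w t^θ := by rw [hB, one_mul]
      have hCeq : C * ((p-1) * s^(p-2)) = θ*b*Real.exp (θ*K*s0)*s^(p-2)/w t^θ := by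
        rw [hCdef]; field_simp
      have hfinal : C * ((p-1)*s^(p-2))
          ≤ θ*Real.exp (θ*K*s)*u s^(-θ-1)*(K*u s - deriv u s) := by
        calc C*((p-1)*s^(p-2)) = θ*b*Real.exp (θ*K*s0)*s^(p-2)/w t^θ := hCeq
        _ ≤ θ*b*Real.exp (θ*K*s)*s^(p-2)/w t^θ := by gcongr
        _ = θ*Real.exp (θ*K*s)*u s^(-θ-1)*(b*s^(p-2)*u s^(1+θ)/w t^θ) := by
            rw [hident]; ring
        _ ≤ _ := hmul
      have hA : u s^(-θ-1) * u s = u s ^ (-θ) := by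
        rw [← Real.rpow_add_one hus.ne' (-θ-1)]
        congr 1
        ring
      rw [← hA]
      nlinarith [hfinal]
  -- conclude H s0 ≤ H t
  have key2 : Real.exp (θ*K*s0) * u s0 ^ (-θ) - C * s0 ^ (p-1)
      ≤ Real.exp (θ*K*t) * u t ^ (-θ) - C * t ^ (p-1) :=
    hmono (Set.left_mem_Icc.2 hs0t.le) (Set.right_mem_Icc.2 hs0t.le) hs0t.le
  have hus0 : 0 < u s0 ^ (-θ) := Real.rpow_pos_of_pos (hu_pos s0 hs00.le) _
  have hes0p : 0 < Real.exp (θ*K*s0) := Real.exp_pos _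
  have key3 : C * (t^(p-1) - s0^(p-1)) ≤ Real.exp (θ*K*t) * u t^(-θ) := by
    have h1 : C*(t^(p-1)-s0^(p-1)) = C*t^(p-1) - C*s0^(p-1) := by ring
    nlinarith [mul_pos hes0p hus0]
  have hsplit : s0 ^ (p-1) = t^(p-1) * (1-x)^(p-1) := by
    rw [hs0def, Real.mul_rpow ht.le (by linarith)]
  have key5 : θ*b*Real.exp (θ*K*s0)*t^(p-1)*x/(2*w t^θ) ≤ Real.exp (θ*K*t)*u t^(-θ) := by
    have key4 : C * (t^(p-1) * ((p-1)*x/2)) ≤ C * (t^(p-1) - s0^(p-1)) := by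
      rw [hsplit, show t^(p-1) - t^(p-1)*(1-x)^(p-1) = t^(p-1)*(1-(1-x)^(p-1)) by ring]
      exact mul_le_mul_of_nonneg_left
        (mul_le_mul_of_nonneg_left helem htp.le) hC0.le
    have heq : C * (t^(p-1)*((p-1)*x/2)) = θ*b*Real.exp (θ*K*s0)*t^(p-1)*x/(2*w t^θ) := by
      rw [hCdef]; field_simp
    linarith [key4, key3]
  -- invert
  have hut0 : 0 < u t := hu_pos t ht.le
  have hutθ : 0 < u t ^ θ := Real.rpow_pos_of_pos hut0 θ
  have het : 0 < Real.exp (θ*K*t) := Real.exp_pos _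
  have hL0 : 0 < θ*b*Real.exp (θ*K*s0)*t^(p-1)*x/(2*w t^θ) := by
    apply div_pos _ (by positivity)
    exact mul_pos (mul_pos (mul_pos (mul_pos hθ hb) hes0p) htp) hx0
  have key6 : θ*b*Real.exp (θ*K*s0)*t^(p-1)*x/(2*w t^θ) / Real.exp (θ*K*t) ≤ u t^(-θ) := by
    rw [div_le_iff₀ het]
    nlinarith [key5]
  have hG : u t ^ (-θ) = (u t ^ θ)⁻¹ := Real.rpow_neg hut0.le θ
  have key7 : u t ^ θ ≤ Real.exp (θ*K*t) / (θ*b*Real.exp (θ*K*s0)*t^(p-1)*x/(2*w t^θ)) := by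
    calc u t ^ θ = (u t ^ (-θ))⁻¹ := by rw [hG, inv_inv]
    _ ≤ (θ*b*Real.exp (θ*K*s0)*t^(p-1)*x/(2*w t^θ) / Real.exp (θ*K*t))⁻¹ :=
        inv_anti₀ (div_pos hL0 het) key6
    _ = _ := by rw [inv_div]
  -- identify the bound with Q
  set Q := 2*p^a*Real.exp (θ*(K*(x*t)))*w t^θ/(θ*b*t^(p-1)) with hQdef
  have hpa : 0 < p ^ a := Real.rpow_pos_of_pos hp0 _
  have hQeq : Real.exp (θ*K*t) / (θ*b*Real.exp (θ*K*s0)*t^(p-1)*x/(2*w t^θ)) = Q := by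
    have hEt : Real.exp (θ*K*t) = Real.exp (θ*K*s0) * Real.exp (θ*(K*(x*t))) := by
      rw [← Real.exp_add]; congr 1; rw [hs0def]; ring
    rw [hQdef, show (p:ℝ)^a = x⁻¹ from hxinv.symm, hEt]
    field_simp
  have key8 : u t ^ θ ≤ Q := hQeq ▸ key7
  -- final rpow algebra
  have hQpos : 0 < Q := by
    rw [hQdef]
    apply div_pos _ (by positivity)
    positivity
  have hut_eq : (u t ^ θ) ^ (1/θ) = u t := by
    rw [← Real.rpow_mul hut0.le, mul_one_div, div_self hθ.ne', Real.rpow_one]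
  have step : u t ≤ Q ^ (1/θ) := by
    rw [← hut_eq]
    exact Real.rpow_le_rpow hutθ.le key8 (by positivity)
  have hQform : Q = (2*p^a/(θ*b)) * (t^(p-1))⁻¹ * Real.exp (θ*(K*(x*t))) * (w t ^ θ) := by
    rw [hQdef]; field_simp; try ring
  have hfin : Q ^ (1/θ) = (2 * p ^ a / (θ * b)) ^ (1 / θ) * t ^ (-(p - 1) / θ) *
      Real.exp (K * x * t) * w t := by
    have h1 : (0:ℝ) ≤ 2*p^a/(θ*b) := by positivity
    have h2 : (0:ℝ) ≤ (t^(p-1))⁻¹ := by positivity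
    have h3 : (0:ℝ) ≤ Real.exp (θ*(K*(x*t))) := (Real.exp_pos _).le
    rw [hQform, Real.mul_rpow (by positivity) (Real.rpow_pos_of_pos hW θ).le,
      Real.mul_rpow (by positivity) h3, Real.mul_rpow h1 h2]
    congr 1
    · congr 1
      · congr 1
        rw [← Real.rpow_neg ht.le, ← Real.rpow_mul ht.le,
          show -(p-1)*(1/θ) = -(p-1)/θ by ring]
      · rw [show θ*(K*(x*t)) = (K*x*t)*θ by ring, Real.exp_mul,
          ← Real.rpow_mul (Real.exp_pos _).le, mul_one_div, div_self hθ.ne',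
          Real.rpow_one]
    · rw [← Real.rpow_mul hW.le, mul_one_div, div_self hθ.ne', Real.rpow_one]
  calc u t ≤ Q ^ (1/θ) := step
  _ = _ := by rw [hfin]
end
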